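/- Let G be a finite simple graph and D a dominating set of G. Then there exists an independent set X ⊆ D that dominates D (every vertex of D \ X has a neighbor in X) and a set I ⊆ V(G) \ D such that X ∪ I is an independent dominating set of G. -/

import Mathlib

open Finset

/-- `D` is a dominating set of `G`: every vertex outside `D` has a neighbor in `D`. -/
def IsDomSet {V : Type*} (G : SimpleGraph V) (D : Finset V) : Prop :=
  ∀ v ∉ D, ∃ u ∈ D, G.Adj u v

/-- `D` is an independent set of `G`. -/
def IsIndepSet {V : Type*} (G : SimpleGraph V) (D : Finset V) : Prop :=
  ∀ u ∈ D, ∀ v ∈ D, ¬ G.Adj u v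

/-- The domination number. -/
noncomputable def domNum {V : Type*} [Fintype V] (G : SimpleGraph V) : ℕ :=
  sInf {n | ∃ D : Finset V, IsDomSet G D ∧ D.card = n}

/-- The independent domination number. -/
noncomputable def indDomNum {V : Type*} [Fintype V] (G : SimpleGraph V) : ℕ :=
  sInf {n | ∃ D : Finset V, IsDomSet G D ∧ IsIndepSet G D ∧ D.card = n}

lemma indep_insert {V : Type*} [DecidableEq V] {G : SimpleGraph V} {X : Finset V} {v : V}
    (hX : IsIndepSet G X) (hv : ∀ u ∈ X, ¬ G.Adj u v) :
    IsIndepSet G (insert v X) := by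
  intro a ha b hb hab
  rcases Finset.mem_insert.1 ha with h1 | h1
  · subst h1
    rcases Finset.mem_insert.1 hb with h2 | h2
    · subst h2; exact G.irrefl hab
    · exact hv b h2 hab.symm
  · rcases Finset.mem_insert.1 hb with h2 | h2
    · subst h2; exact hv a h1 hab
    · exact hX a h1 b h2 hab

theorem stmt8 {V : Type*} [Fintype V] [DecidableEq V] (G : SimpleGraph V)
    (D : Finset V) (hD : IsDomSet G D) :
    ∃ X I : Finset V, X ⊆ D ∧ IsIndepSet G X ∧
      (∀ v ∈ D \ X, ∃ u ∈ X, G.Adj u v) ∧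
      I ⊆ Dᶜ ∧ IsDomSet G (X ∪ I) ∧ IsIndepSet G (X ∪ I) := by
  classical
  -- choose X of maximal card among independent subsets of D
  obtain ⟨X, hXmem, hXmax⟩ := (D.powerset.filter (fun X => IsIndepSet G X)).exists_max_image
    Finset.card ⟨∅, by rw [Finset.mem_filter]; exact ⟨Finset.empty_mem_powerset _, by simp [IsIndepSet]⟩⟩
  rw [Finset.mem_filter, Finset.mem_powerset] at hXmem
  obtain ⟨hXD, hXind⟩ := hXmem
  have hXdom : ∀ v ∈ D \ X, ∃ u ∈ X, G.Adj u v := by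
    intro v hv
    rw [Finset.mem_sdiff] at hv
    by_contra h
    push_neg at h
    have hins : IsIndepSet G (insert v X) := indep_insert hXind fun u hu => h u hu
    have := hXmax (insert v X) (by
      rw [Finset.mem_filter, Finset.mem_powerset]
      exact ⟨Finset.insert_subset hv.1 hXD, hins⟩)
    rw [Finset.card_insert_of_notMem hv.2] at this
    omega
  -- choose I of maximal card among J ⊆ Dᶜ with X ∪ J independent
  obtain ⟨I, hImem, hImax⟩ := (Dᶜ.powerset.filter (fun J => IsIndepSet G (X ∪ J))).exists_max_image
    Finset.card ⟨∅, by simpa using hXind⟩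
  rw [Finset.mem_filter, Finset.mem_powerset] at hImem
  obtain ⟨hIc, hIind⟩ := hImem
  refine ⟨X, I, hXD, hXind, hXdom, hIc, ?_, hIind⟩
  intro v hv
  rw [Finset.mem_union] at hv
  push_neg at hv
  by_cases hvD : v ∈ D
  · obtain ⟨u, hu, hadj⟩ := hXdom v (Finset.mem_sdiff.2 ⟨hvD, hv.1⟩)
    exact ⟨u, Finset.mem_union_left _ hu, hadj⟩
  · by_contra h
    push_neg at h
    have hins : IsIndepSet G (X ∪ insert v I) := by
      rw [Finset.union_insert]
      exact indep_insert hIind fun u hu => h u (by simpa using hu)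
    have := hImax (insert v I) (by
      rw [Finset.mem_filter, Finset.mem_powerset]
      exact ⟨Finset.insert_subset (Finset.mem_compl.2 hvD) hIc, hins⟩)
    rw [Finset.card_insert_of_notMem hv.2] at this
    omega
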